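/- Let A be a probability group and let a, b ∈ A with b = a⁻¹. Then p(a·a = a) = p(a·b = b). -/
import Mathlib


/-- A probability group (Harrison): a set `A` with a distinguished element `one`,
an inverse map `inv`, and a probability map `p` satisfying axioms (1)-(6). -/
structure ProbabilityGroup (A : Type*) where
  /-- the probability map: `p a b c` is `p(a·b = c)` -/
  p : A → A → A → ℝ
  /-- the unit element -/
  one : A
  /-- the inverse map -/
  inv : A → A
  p_nonneg : ∀ a b c, 0 ≤ p a b c
  finite_support : ∀ a b, {c | p a b c ≠ 0}.Finite
  sum_eq_one : ∀ a b, ∑ᶠ c, p a b c = 1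
  assoc : ∀ a b c d, ∑ᶠ x, p a b x * p x c d = ∑ᶠ y, p a y d * p b c y
  one_mul : ∀ a, p one a a = 1
  mul_one : ∀ a, p a one a = 1
  inv_pos : ∀ a, 0 < p a (inv a) one
  inv_unique : ∀ a b, 0 < p a b one → b = inv a
  p_inv : ∀ a b c, p a b c = p (inv b) (inv a) (inv c)
  inv_symm : ∀ a, p a (inv a) one = p (inv a) a one

/-- The size `s(a) = 1 / p(a·a⁻¹ = 1)` of an element of a probability group. -/
noncomputable def ProbabilityGroup.s {A : Type*} (P : ProbabilityGroup A) (a : A) : ℝ :=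
  1 / P.p a (P.inv a) P.one

/-- If `b = a⁻¹` in a probability group, then `p(a·a = a) = p(a·b = b)`. -/
theorem probabilityGroup_inv_identity₁ {A : Type*} (P : ProbabilityGroup A) (a b : A)
    (hb : b = P.inv a) :
    P.p a a a = P.p a b b := by
  subst hb
  -- inv is involutive
  have hinv : ∀ x, P.inv (P.inv x) = x := by
    intro x
    have h : 0 < P.p (P.inv x) x P.one := P.inv_symm x ▸ P.inv_pos x
    exact (P.inv_unique (P.inv x) x h).symm
  have key := P.assoc a a (P.inv a) P.one
  have hL : ∑ᶠ x, P.p a a x * P.p x (P.inv a) P.one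
      = P.p a a a * P.p a (P.inv a) P.one := by
    apply finsum_eq_single
    intro x hx
    by_contra hne
    have hpos : 0 < P.p x (P.inv a) P.one := by
      rcases lt_or_eq_of_le (P.p_nonneg x (P.inv a) P.one) with h | h
      · exact h
      · exact absurd (by rw [← h, mul_zero]) hne
    have := P.inv_unique x (P.inv a) hpos
    have : x = a := by
      have := congrArg P.inv this
      rw [hinv, hinv] at this; exact this.symm
    exact hx this
  have hR : ∑ᶠ y, P.p a y P.one * P.p a (P.inv a) y
      = P.p a (P.inv a) P.one * P.p a (P.inv a) (P.inv a) := by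
    apply finsum_eq_single
    intro y hy
    by_contra hne
    have hpos : 0 < P.p a y P.one := by
      rcases lt_or_eq_of_le (P.p_nonneg a y P.one) with h | h
      · exact h
      · exact absurd (by rw [← h, zero_mul]) hne
    exact hy (P.inv_unique a y hpos)
  rw [hL, hR] at key
  have hpos := P.inv_pos a
  have := mul_right_cancel₀ (ne_of_gt hpos) (key.trans (mul_comm _ _))
  exact this
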